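/- arXiv:2311.10503 — 4 statements merged into one kernel-verified Lean document; each statement's English description precedes it below -/
import Mathlib

section
/- For every x > 0, every coherent density matrix ρ (ρ_{mn} ≠ 0 for some m ≠ n) admits a Hermitian matrix W with nonnegative diagonal entries and Tr(W) = x such that Tr(Wρ) < 0. (Completeness of the coherence criterion with prior trace knowledge x.) -/
open Matrix ComplexOrder

lemma std_ct {d : ℕ} (i j : Fin d) (a : ℂ) :
    (Matrix.single i j a)ᴴ = Matrix.single j i (starRingEnd ℂ a) := by
  ext p q
  simp only [Matrix.conjTranspose_apply, Matrix.single, Matrix.of_apply, apply_ite,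
    star_zero]
  by_cases h1 : i = q <;> by_cases h2 : j = p <;> simp [h1, h2]

lemma std_trace {d : ℕ} (i j : Fin d) (h : i ≠ j) (a : ℂ) :
    (Matrix.single i j a).trace = 0 := by
  simp [Matrix.trace, Matrix.diag, Matrix.single, Matrix.of_apply,
    Finset.sum_ite_eq, h, fun k => show ¬(i = k ∧ j = k) from fun ⟨h1, h2⟩ => h (h1.trans h2.symm)]

lemma std_mul_trace {d : ℕ} (i j : Fin d) (a : ℂ) (M : Matrix (Fin d) (Fin d) ℂ) :
    (Matrix.single i j a * M).trace = a * M j i := by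
  simp [Matrix.trace, Matrix.diag, Matrix.mul_apply, Matrix.single, Matrix.of_apply,
    ite_and, ite_mul, Finset.sum_ite_eq, Finset.sum_ite_eq']

def IsDensityMatrix {d : ℕ} (ρ : Matrix (Fin d) (Fin d) ℂ) : Prop :=
  ρ.PosSemidef ∧ ρ.trace = 1

theorem stmt_10 {d : ℕ} (x : ℝ) (hx : 0 < x) (ρ : Matrix (Fin d) (Fin d) ℂ)
    (hρ : IsDensityMatrix ρ) (m n : Fin d) (hmn : m ≠ n) (hcoh : ρ m n ≠ 0) :
    ∃ W : Matrix (Fin d) (Fin d) ℂ, W.IsHermitian ∧ (∀ i, 0 ≤ (W i i).re) ∧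
      W.trace = (x : ℂ) ∧ ((W * ρ).trace).re < 0 := by
  have hd : 0 < d := Fin.pos m
  have hdR : (0:ℝ) < (d:ℝ) := by exact_mod_cast hd
  set a : ℂ := ρ m n with ha
  have hna : (0:ℝ) < ‖a‖^2 := pow_pos (norm_pos_iff.mpr hcoh) 2
  set t : ℝ := x / (d * ‖a‖^2) with ht
  have htpos : 0 < t := div_pos hx (by positivity)
  set c : ℝ := x / d with hc
  have hcpos : 0 < c := div_pos hx hdR
  refine ⟨(c : ℂ) • 1 - (t : ℂ) • (Matrix.single m n a + Matrix.single n m (starRingEnd ℂ a)),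
    ?_, ?_, ?_, ?_⟩
  · unfold Matrix.IsHermitian
    rw [conjTranspose_sub, conjTranspose_smul, conjTranspose_smul, conjTranspose_add,
      conjTranspose_one, std_ct, std_ct]
    simp [Complex.conj_ofReal, add_comm]
  · intro i
    have h1 : Matrix.single m n a i i = 0 := by
      rw [Matrix.single, Matrix.of_apply, if_neg]
      rintro ⟨h1, h2⟩; exact hmn (h1.trans h2.symm)
    have h2 : Matrix.single n m (starRingEnd ℂ a) i i = 0 := by
      rw [Matrix.single, Matrix.of_apply, if_neg]
      rintro ⟨h1, h2⟩; exact hmn (h2.trans h1.symm)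
    simp only [Matrix.sub_apply, Matrix.smul_apply, Matrix.add_apply, Matrix.one_apply_eq,
      smul_eq_mul, h1, h2, add_zero, mul_zero, mul_one, sub_zero, Complex.ofReal_re]
    exact hcpos.le
  · rw [trace_sub, trace_smul, trace_smul, trace_add, std_trace m n hmn,
      std_trace n m (Ne.symm hmn), trace_one]
    simp only [add_zero, smul_zero, sub_zero, smul_eq_mul, Fintype.card_fin]
    rw [hc]
    push_cast
    rw [div_mul_cancel₀ _ (by exact_mod_cast hdR.ne' : (d:ℂ) ≠ 0)]
    ring
  · have hH : ρ n m = starRingEnd ℂ a := (hρ.1.1.apply n m).symm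
    rw [sub_mul, smul_mul_assoc, smul_mul_assoc, add_mul, trace_sub, trace_smul, trace_smul,
      trace_add, std_mul_trace, std_mul_trace, one_mul, hρ.2, hH, ← ha]
    have key : a * starRingEnd ℂ a + starRingEnd ℂ a * a = ((2 * ‖a‖^2 : ℝ) : ℂ) := by
      rw [Complex.mul_conj, mul_comm (starRingEnd ℂ a) a, Complex.mul_conj,
        Complex.normSq_eq_norm_sq]
      push_cast
      ring
    rw [key]
    simp only [smul_eq_mul, mul_one, ← Complex.ofReal_mul, ← Complex.ofReal_sub,
      Complex.ofReal_re]
    have : t * (2 * ‖a‖^2) = 2 * c := by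
      have hd0 : (d:ℝ) ≠ 0 := hdR.ne'
      have ha0 : ‖a‖ ≠ 0 := norm_ne_zero_iff.mpr hcoh
      have ha1 : ‖a‖ ≠ 0 := ha0
      rw [ht, hc]
      field_simp
    rw [this]
    linarith
end

section
/- Let x > 0. For any finite set {W₁,…,Wₙ} of d×d Hermitian matrices with nonnegative diagonals, trace x, and a negative eigenvalue each, there exists a coherent density matrix ρ such that for every i, 0 ≤ Tr(Wᵢρ) ≤ x. Hence the criterion with prior trace x is not finitely completable. -/
open Matrix ComplexOrder

lemma psd_add {d : ℕ} {A B : Matrix (Fin d) (Fin d) ℂ} (hA : A.PosSemidef)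
    (hB : B.PosSemidef) : (A + B).PosSemidef := by
  refine ⟨hA.1.add hB.1, fun v => ?_⟩
  simpa [mul_add, add_mul] using add_nonneg (hA.2 v) (hB.2 v)

lemma psd_smul {d : ℕ} {A : Matrix (Fin d) (Fin d) ℂ} (hA : A.PosSemidef) {c : ℝ}
    (hc : 0 ≤ c) : ((c : ℂ) • A).PosSemidef := by
  constructor
  · unfold Matrix.IsHermitian
    rw [conjTranspose_smul, hA.1]
    norm_num
  · intro v
    exact (hA.smul (a := (c:ℂ)) (by exact_mod_cast hc)).2 v

lemma trace_mul_vecMulVec {d : ℕ} (A : Matrix (Fin d) (Fin d) ℂ) (u v : Fin d → ℂ) :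
    (A * vecMulVec u v).trace = v ⬝ᵥ A.mulVec u := by
  simp only [trace, diag, mul_apply, vecMulVec_apply, dotProduct, mulVec]
  congr 1; ext j
  rw [Finset.mul_sum]
  congr 1; ext k
  ring

theorem stmt_11 {d : ℕ} (hd : 2 ≤ d) (x : ℝ) (hx : 0 < x) (n : ℕ)
    (W : Fin n → Matrix (Fin d) (Fin d) ℂ)
    (hHerm : ∀ i, (W i).IsHermitian) (hdiag : ∀ i j, 0 ≤ (W i j j).re)
    (htr : ∀ i, (W i).trace = (x : ℂ)) (hneg : ∀ i, ¬ (W i).PosSemidef) :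
    ∃ ρ : Matrix (Fin d) (Fin d) ℂ, IsDensityMatrix ρ ∧
      (∃ a b : Fin d, a ≠ b ∧ ρ a b ≠ 0) ∧
      ∀ i, 0 ≤ ((W i * ρ).trace).re ∧ ((W i * ρ).trace).re ≤ x := by
  have hd0 : (0:ℝ) < d := by positivity
  set a : Fin d := ⟨0, by omega⟩
  set b : Fin d := ⟨1, by omega⟩
  have hab : a ≠ b := by simp [a, b, Fin.ext_iff]
  set u : Fin d → ℂ := fun j => if j = a then 1 else if j = b then 1 else 0 with hu
  set P : Matrix (Fin d) (Fin d) ℂ := vecMulVec u (star u) with hP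
  -- P is PSD
  have hPpsd : P.PosSemidef := by
    have : P = replicateCol (Fin 1) u * (replicateCol (Fin 1) u)ᴴ := by
      rw [conjTranspose_replicateCol, hP]; exact vecMulVec_eq (Fin 1) u (star u)
    rw [this]
    exact posSemidef_self_mul_conjTranspose _
  -- trace of P
  have hPtr : P.trace = 2 := by
    simp only [hP, trace, diag, vecMulVec_apply, Pi.star_apply, hu]
    rw [show (fun j : Fin d =>
        (if j = a then (1:ℂ) else if j = b then 1 else 0) *
          star (if j = a then (1:ℂ) else if j = b then 1 else 0)) =
        fun j => (if j = a then (1:ℂ) else 0) + (if j = b then 1 else 0) from ?_]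
    · rw [Finset.sum_add_distrib]
      simp
      norm_num
    · ext j
      by_cases h1 : j = a <;> by_cases h2 : j = b <;> simp_all [hab]
  set r : Fin n → ℝ := fun i => ((W i * P).trace).re with hr
  set S : ℝ := ∑ i, |r i| with hS
  have hS0 : 0 ≤ S := Finset.sum_nonneg fun i _ => abs_nonneg _
  have hrS : ∀ i, |r i| ≤ S := fun i =>
    Finset.single_le_sum (fun j _ => abs_nonneg (r j)) (Finset.mem_univ i)
  set m : ℝ := x / d with hm
  have hm0 : 0 < m := by positivity
  set t : ℝ := m / (m + S + x) with ht
  have hden : 0 < m + S + x := by linarith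
  have ht0 : 0 < t := by positivity
  have ht1 : t < 1 := by
    rw [ht, div_lt_one hden]; linarith
  have htkey : t * (m + S + x) = m := by
    rw [ht, div_mul_cancel₀ _ hden.ne']
  set c₁ : ℝ := (1 - t) / d with hc₁
  set c₂ : ℝ := t / 2 with hc₂
  have hc₁0 : 0 ≤ c₁ := by
    have : 0 ≤ 1 - t := by linarith
    positivity
  have hc₂0 : 0 ≤ c₂ := by positivity
  set ρ : Matrix (Fin d) (Fin d) ℂ := (c₁ : ℂ) • 1 + (c₂ : ℂ) • P with hρ
  have hρpsd : ρ.PosSemidef := psd_add (psd_smul Matrix.PosSemidef.one hc₁0)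
    (psd_smul hPpsd hc₂0)
  have hρtr : ρ.trace = 1 := by
    rw [hρ, trace_add, trace_smul, trace_smul, trace_one, hPtr]
    push_cast
    have : (d:ℂ) ≠ 0 := by exact_mod_cast (by positivity : (d:ℝ) ≠ 0)
    simp only [Fintype.card_fin, smul_eq_mul, hc₁, hc₂]; push_cast; field_simp; ring
  refine ⟨ρ, ⟨hρpsd, hρtr⟩, ⟨a, b, hab, ?_⟩, fun i => ?_⟩
  · rw [hρ]
    have hua : u a = 1 := by simp [hu]
    have hub : u b = 1 := by simp [hu, Ne.symm hab]
    simp only [Matrix.add_apply, Matrix.smul_apply, one_apply_ne hab, vecMulVec_apply, hP,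
      Pi.star_apply, smul_eq_mul, mul_zero, zero_add, hua, hub, star_one, mul_one]
    exact_mod_cast (by positivity : c₂ ≠ 0)
  · have hexp : ((W i * ρ).trace).re = c₁ * x + c₂ * r i := by
      rw [hρ, mul_add, Matrix.mul_smul, Matrix.mul_smul, trace_add, trace_smul,
        trace_smul, mul_one, htr i]
      simp [hr, Complex.re_ofReal_mul]
    have hri : |r i| ≤ S := hrS i
    have habs := abs_le.mp hri
    rw [hexp]
    have h1 : c₁ * x = (1 - t) * m := by rw [hc₁, hm]; ring
    have h2 : c₂ = t / 2 := hc₂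
    have htx : 0 ≤ t * x := mul_nonneg ht0.le hx.le
    have htS : t * S ≤ m := by nlinarith
    constructor
    · nlinarith [habs.1, mul_nonneg ht0.le hS0]
    · have hmx : 2 * m ≤ x := by
        have h2d : (2:ℝ) ≤ d := by exact_mod_cast hd
        rw [hm, show 2 * (x / ↑d) = 2 * x / ↑d by ring, div_le_iff₀ hd0]
        nlinarith
      nlinarith [habs.2]
end

section
/- Let x > 0 and let W₁,…,Wₙ be Hermitian matrices with nonnegative diagonals and trace x. Suppose that for every subset S of {1,…,n} with |S| ≥ ⌈n/2⌉ there exist positive weights t_i (i ∈ S) summing to 1 such that Σ_{i∈S} t_i W_i is positive semidefinite. Then no density matrix ρ satisfies, for all i, (Tr(Wᵢρ) < 0 or Tr(Wᵢρ) > x); i.e., ⋂ᵢ C_x[Wᵢ] = ∅. -/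
open Matrix ComplexOrder

lemma psd_trace_re_nonneg {m : ℕ} {M : Matrix (Fin m) (Fin m) ℂ} (hM : M.PosSemidef) :
    0 ≤ M.trace.re := by
  rw [Matrix.trace, Complex.re_sum]
  refine Finset.sum_nonneg fun j _ => ?_
  have := hM.re_dotProduct_nonneg (Pi.single j 1)
  simpa [dotProduct, Matrix.mulVec, Pi.single_apply, Finset.sum_ite_eq] using this

lemma trace_mul_re_nonneg {m : ℕ} {A B : Matrix (Fin m) (Fin m) ℂ}
    (hA : A.PosSemidef) (hB : B.PosSemidef) : 0 ≤ ((A * B).trace).re := by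
  open MatrixOrder in obtain ⟨C, rfl⟩ := CStarAlgebra.nonneg_iff_eq_star_mul_self.mp hB.nonneg
  rw [← Matrix.mul_assoc, Matrix.trace_mul_cycle]
  exact psd_trace_re_nonneg (hA.mul_mul_conjTranspose_same C)

lemma one_sub_psd {m : ℕ} {ρ : Matrix (Fin m) (Fin m) ℂ} (h : ρ.PosSemidef)
    (htr : ρ.trace = 1) : (1 - ρ).PosSemidef := by
  classical
  have hH := h.1
  have hspec := by simpa only [Unitary.conjStarAlgAut_apply, Unitary.coe_star] using hH.spectral_theorem
  set U : Matrix (Fin m) (Fin m) ℂ := (hH.eigenvectorUnitary : Matrix (Fin m) (Fin m) ℂ) with hU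
  have hUU : U * star U = 1 := (Matrix.mem_unitaryGroup_iff).mp hH.eigenvectorUnitary.2
  have hUU' : star U * U = 1 := (Matrix.mem_unitaryGroup_iff').mp hH.eigenvectorUnitary.2
  have hsum : ∑ i, hH.eigenvalues i = 1 := by
    have h1 : ρ.trace = ∑ i, (hH.eigenvalues i : ℂ) := by
      conv_lhs => rw [hspec]
      rw [Matrix.trace_mul_cycle, hUU', Matrix.one_mul]
      simp [Matrix.trace_diagonal]
    have h2 : ((∑ i, hH.eigenvalues i : ℝ) : ℂ) = 1 := by
      push_cast
      rw [← h1, htr]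
    exact_mod_cast h2
  have hle : ∀ i, hH.eigenvalues i ≤ 1 := by
    intro i
    calc hH.eigenvalues i ≤ ∑ j, hH.eigenvalues j :=
          Finset.single_le_sum (fun j _ => h.eigenvalues_nonneg j) (Finset.mem_univ i)
      _ = 1 := hsum
  have key : 1 - ρ = U * (1 - Matrix.diagonal (RCLike.ofReal ∘ hH.eigenvalues)) * star U := by
    rw [Matrix.mul_sub, Matrix.sub_mul, Matrix.mul_one, hUU, ← hspec]
  rw [key]
  have hdiagpsd : (1 - Matrix.diagonal (RCLike.ofReal ∘ hH.eigenvalues) :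
      Matrix (Fin m) (Fin m) ℂ).PosSemidef := by
    have hd : (1 : Matrix (Fin m) (Fin m) ℂ) - Matrix.diagonal (RCLike.ofReal ∘ hH.eigenvalues)
        = Matrix.diagonal (fun i => (((1 - hH.eigenvalues i : ℝ)) : ℂ)) := by
      ext i j
      by_cases hij : i = j <;> simp [Matrix.diagonal, Matrix.one_apply, hij]
    rw [hd]
    exact Matrix.posSemidef_diagonal_iff.mpr fun i =>
      Complex.zero_le_real.mpr (by linarith [hle i])
  have := hdiagpsd.mul_mul_conjTranspose_same U
  simpa [Matrix.star_eq_conjTranspose] using this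

theorem stmt_13 {d : ℕ} (x : ℝ) (hx : 0 < x) (n : ℕ)
    (W : Fin n → Matrix (Fin d) (Fin d) ℂ)
    (hHerm : ∀ i, (W i).IsHermitian) (hdiag : ∀ i j, 0 ≤ (W i j j).re)
    (htr : ∀ i, (W i).trace = (x : ℂ))
    (hsub : ∀ S : Finset (Fin n), (n + 1) / 2 ≤ S.card →
      ∃ t : Fin n → ℝ, (∀ i ∈ S, 0 < t i) ∧ (∑ i ∈ S, t i) = 1 ∧
        (∑ i ∈ S, ((t i : ℂ) • W i)).PosSemidef) :
    ¬ ∃ ρ : Matrix (Fin d) (Fin d) ℂ, IsDensityMatrix ρ ∧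
      ∀ i, ((W i * ρ).trace).re < 0 ∨ x < ((W i * ρ).trace).re := by
  classical
  rintro ⟨ρ, ⟨hρpsd, hρtr⟩, hall⟩
  set S : Finset (Fin n) := Finset.univ.filter (fun i => ((W i * ρ).trace).re < 0) with hS
  set T : Finset (Fin n) := Finset.univ.filter (fun i => x < ((W i * ρ).trace).re) with hT
  have hcover : (Finset.univ : Finset (Fin n)) ⊆ S ∪ T := by
    intro i _
    rcases hall i with h | h
    · exact Finset.mem_union_left _ (Finset.mem_filter.mpr ⟨Finset.mem_univ i, h⟩)
    · exact Finset.mem_union_right _ (Finset.mem_filter.mpr ⟨Finset.mem_univ i, h⟩)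
  have hcard : n ≤ S.card + T.card := by
    calc n = (Finset.univ : Finset (Fin n)).card := by simp
      _ ≤ (S ∪ T).card := Finset.card_le_card hcover
      _ ≤ S.card + T.card := Finset.card_union_le S T
  -- key computation of trace of a convex combination against ρ
  have keytr : ∀ (F : Finset (Fin n)) (t : Fin n → ℝ),
      (((∑ i ∈ F, ((t i : ℂ) • W i)) * ρ).trace).re
        = ∑ i ∈ F, t i * ((W i * ρ).trace).re := by
    intro F t
    rw [Finset.sum_mul]
    simp only [Matrix.smul_mul, Matrix.trace_sum, Matrix.trace_smul, smul_eq_mul]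
    rw [Complex.re_sum]
    exact Finset.sum_congr rfl fun i _ => by simp [Complex.mul_re]
  rcases le_or_gt ((n + 1) / 2) S.card with hc | hc
  · obtain ⟨t, htpos, htsum, htpsd⟩ := hsub S hc
    have hne : S.Nonempty := by
      by_contra hne
      rw [Finset.not_nonempty_iff_eq_empty] at hne
      rw [hne, Finset.sum_empty] at htsum
      norm_num at htsum
    have h1 : (((∑ i ∈ S, ((t i : ℂ) • W i)) * ρ).trace).re < 0 := by
      rw [keytr]
      have : ∑ i ∈ S, t i * ((W i * ρ).trace).re < ∑ i ∈ S, (0 : ℝ) := by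
        refine Finset.sum_lt_sum_of_nonempty hne fun i hi => ?_
        have hlt : ((W i * ρ).trace).re < 0 := (Finset.mem_filter.mp hi).2
        exact mul_neg_of_pos_of_neg (htpos i hi) hlt
      simpa using this
    exact absurd (trace_mul_re_nonneg htpsd hρpsd) (not_le.mpr h1)
  · have hc' : (n + 1) / 2 ≤ T.card := by omega
    obtain ⟨t, htpos, htsum, htpsd⟩ := hsub T hc'
    have hne : T.Nonempty := by
      by_contra hne
      rw [Finset.not_nonempty_iff_eq_empty] at hne
      rw [hne, Finset.sum_empty] at htsum
      norm_num at htsum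
    -- trace of the combination is x
    have htrA : ((∑ i ∈ T, ((t i : ℂ) • W i)).trace).re = x := by
      rw [Matrix.trace_sum]
      simp only [Matrix.trace_smul, smul_eq_mul, htr]
      rw [Complex.re_sum]
      have : ∀ i ∈ T, ((t i : ℂ) * (x : ℂ)).re = t i * x := by
        intro i _; simp [Complex.mul_re]
      rw [Finset.sum_congr rfl this, ← Finset.sum_mul, htsum, one_mul]
    -- lower bound: > x
    have h1 : x < (((∑ i ∈ T, ((t i : ℂ) • W i)) * ρ).trace).re := by
      rw [keytr]
      have : ∑ i ∈ T, t i * x < ∑ i ∈ T, t i * ((W i * ρ).trace).re := by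
        refine Finset.sum_lt_sum_of_nonempty hne fun i hi => ?_
        exact (mul_lt_mul_iff_right₀ (htpos i hi)).mpr (Finset.mem_filter.mp hi).2
      calc x = ∑ i ∈ T, t i * x := by rw [← Finset.sum_mul, htsum, one_mul]
        _ < _ := this
    -- upper bound: ≤ x, via 1 - ρ PSD
    have h2 : (((∑ i ∈ T, ((t i : ℂ) • W i)) * (1 - ρ)).trace).re
        = ((∑ i ∈ T, ((t i : ℂ) • W i)).trace).re
          - (((∑ i ∈ T, ((t i : ℂ) • W i)) * ρ).trace).re := by
      rw [Matrix.mul_sub, Matrix.mul_one]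
      simp [Matrix.trace_sub]
    have h3 := trace_mul_re_nonneg htpsd (one_sub_psd hρpsd hρtr)
    rw [h2, htrA] at h3
    linarith
end

section
/- Let W be a d×d Hermitian matrix with both a positive and a negative eigenvalue. Then the complex span of S_W = {ρ density matrix : Tr(Wρ) = 0} equals M_W = {X ∈ Mat_d(ℂ) : Tr(WX) = 0}. -/
open Matrix ComplexOrder

lemma quad_real {d : ℕ} {H : Matrix (Fin d) (Fin d) ℂ} (hH : H.IsHermitian)
    (x : Fin d → ℂ) : (star (star x ⬝ᵥ (H *ᵥ x)) : ℂ) = star x ⬝ᵥ (H *ᵥ x) := by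
  simp only [dotProduct, mulVec, Finset.mul_sum, star_sum, star_mul', star_star, Pi.star_apply]
  rw [Finset.sum_comm]
  refine Finset.sum_congr rfl fun i _ => Finset.sum_congr rfl fun j _ => ?_
  rw [← hH.apply i j]
  ring

lemma quad_bound {d : ℕ} (H : Matrix (Fin d) (Fin d) ℂ) (x : Fin d → ℂ) :
    ‖star x ⬝ᵥ (H *ᵥ x)‖ ≤
      (∑ i, ∑ j, ‖H i j‖) * d * ∑ i, ‖x i‖ ^ 2 := by
  set B := ∑ i, ∑ j, ‖H i j‖ with hB
  set a : Fin d → ℝ := fun i => ‖x i‖ ^ 2 with ha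
  have hBnn : 0 ≤ B := Finset.sum_nonneg fun i _ => Finset.sum_nonneg fun j _ => norm_nonneg _
  have hentry : ∀ i j, ‖H i j‖ ≤ B := by
    intro i j
    calc ‖H i j‖ ≤ ∑ j', ‖H i j'‖ :=
          Finset.single_le_sum (fun _ _ => norm_nonneg _) (Finset.mem_univ j)
      _ ≤ B := Finset.single_le_sum (f := fun i => ∑ j', ‖H i j'‖)
          (fun _ _ => Finset.sum_nonneg fun _ _ => norm_nonneg _) (Finset.mem_univ i)
  simp only [dotProduct, mulVec]
  calc ‖∑ i, star (x i) * ∑ j, H i j * x j‖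
      ≤ ∑ i, ‖star (x i) * ∑ j, H i j * x j‖ := norm_sum_le _ _
    _ ≤ ∑ i, ‖x i‖ * ∑ j, ‖H i j‖ * ‖x j‖ := by
        refine Finset.sum_le_sum fun i _ => ?_
        rw [norm_mul, RCLike.star_def, Complex.norm_conj]
        refine mul_le_mul_of_nonneg_left ?_ (norm_nonneg _)
        refine le_trans (norm_sum_le _ _) (le_of_eq ?_)
        exact Finset.sum_congr rfl fun j _ => norm_mul _ _
    _ ≤ ∑ i, ∑ j, B * ((a i + a j) / 2) := by
        refine Finset.sum_le_sum fun i _ => ?_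
        rw [Finset.mul_sum]
        refine Finset.sum_le_sum fun j _ => ?_
        have h1 : ‖x i‖ * ‖x j‖ ≤ (a i + a j) / 2 := by
          simp only [ha]
          nlinarith [sq_nonneg (‖x i‖ - ‖x j‖)]
        calc ‖x i‖ * (‖H i j‖ * ‖x j‖)
            = ‖H i j‖ * (‖x i‖ * ‖x j‖) := by ring
          _ ≤ B * ((a i + a j) / 2) :=
              mul_le_mul (hentry i j) h1 (by positivity) hBnn
    _ = B * d * ∑ i, a i := by
        simp only [← Finset.mul_sum]
        rw [mul_assoc]
        congr 1
        calc ∑ i, ∑ j, (a i + a j) / 2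
            = ∑ i : Fin d, ((d : ℝ) * a i / 2 + (∑ j, a j) / 2) := by
              refine Finset.sum_congr rfl fun i _ => ?_
              rw [← Finset.sum_div, Finset.sum_add_distrib, Finset.sum_const,
                Finset.card_univ, Fintype.card_fin, nsmul_eq_mul, add_div]
          _ = d * ∑ i, a i := by
              rw [Finset.sum_add_distrib, Finset.sum_const, Finset.card_univ,
                Fintype.card_fin, nsmul_eq_mul, ← Finset.sum_div, ← Finset.mul_sum]
              ring

lemma aux_psd {d : ℕ} {H : Matrix (Fin d) (Fin d) ℂ} (hH : H.IsHermitian) {μ ε : ℝ}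
    (hε : 0 ≤ ε) (hb : ε * ((∑ i, ∑ j, ‖H i j‖) * d) ≤ μ) :
    ((μ : ℂ) • (1 : Matrix (Fin d) (Fin d) ℂ) + (ε : ℂ) • H).PosSemidef := by
  have hBnn : (0:ℝ) ≤ (∑ i, ∑ j, ‖H i j‖) * d := by positivity
  rw [posSemidef_iff_dotProduct_mulVec]
  constructor
  · rw [Matrix.IsHermitian, conjTranspose_add, conjTranspose_smul, conjTranspose_smul,
      conjTranspose_one, hH.eq]
    simp [Complex.star_def, Complex.conj_ofReal]
  · intro x
    rw [add_mulVec, smul_mulVec, smul_mulVec, one_mulVec, dotProduct_add,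
      dotProduct_smul, dotProduct_smul]
    set z := star x ⬝ᵥ (H *ᵥ x) with hzdef
    set N := ∑ i, ‖x i‖ ^ 2 with hN
    have hNnn : 0 ≤ N := Finset.sum_nonneg fun i _ => sq_nonneg _
    have hz : ((z.re : ℝ) : ℂ) = z := by
      rw [Complex.conj_eq_iff_re.mp]
      rw [← RCLike.star_def]
      exact quad_real hH x
    have hxx : star x ⬝ᵥ x = ((N : ℝ) : ℂ) := by
      rw [hN]
      push_cast
      simp only [dotProduct, Pi.star_apply, RCLike.star_def, Complex.sq_norm]
      refine Finset.sum_congr rfl fun i _ => ?_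
      rw [← Complex.normSq_eq_conj_mul_self, ← Complex.sq_norm]
      push_cast
      ring
    have habs : ‖z‖ ≤ (∑ i, ∑ j, ‖H i j‖) * d * N := quad_bound H x
    have hre : -((∑ i, ∑ j, ‖H i j‖) * d * N) ≤ z.re := by
      have h1 : |z.re| ≤ ‖z‖ := Complex.abs_re_le_norm z
      have := abs_le.mp (h1.trans habs)
      linarith [this.1]
    rw [hxx, ← hz, smul_eq_mul, smul_eq_mul, ← Complex.ofReal_mul, ← Complex.ofReal_mul,
      ← Complex.ofReal_add]
    rw [Complex.zero_le_real]
    nlinarith [mul_le_mul_of_nonneg_right hb hNnn]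

set_option maxHeartbeats 1600000 in
theorem stmt_16 {d : ℕ} (W : Matrix (Fin d) (Fin d) ℂ) (hW : W.IsHermitian)
    (hpos : ∃ i, 0 < hW.eigenvalues i) (hneg : ∃ j, hW.eigenvalues j < 0) :
    (Submodule.span ℂ
        {ρ : Matrix (Fin d) (Fin d) ℂ | IsDensityMatrix ρ ∧ (W * ρ).trace = 0} :
      Set (Matrix (Fin d) (Fin d) ℂ)) =
    {X : Matrix (Fin d) (Fin d) ℂ | (W * X).trace = 0} := by
  classical
  set Sset := {ρ : Matrix (Fin d) (Fin d) ℂ | IsDensityMatrix ρ ∧ (W * ρ).trace = 0} with hSset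
  obtain ⟨i₀, ha⟩ := hpos
  obtain ⟨j₀, hb⟩ := hneg
  set lam : Fin d → ℝ := hW.eigenvalues with hlam
  set U : Matrix (Fin d) (Fin d) ℂ := (hW.eigenvectorUnitary : Matrix (Fin d) (Fin d) ℂ) with hUdef
  have hUU : U * star U = 1 := (Matrix.mem_unitaryGroup_iff).mp hW.eigenvectorUnitary.2
  have hUU' : star U * U = 1 := (Matrix.mem_unitaryGroup_iff').mp hW.eigenvectorUnitary.2
  set Φ : (Fin d → ℝ) → Matrix (Fin d) (Fin d) ℂ :=
    fun r => U * Matrix.diagonal (fun i => (r i : ℂ)) * star U with hΦ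
  have hspec : W = Φ lam := by
    have := hW.spectral_theorem
    simpa [Function.comp_def, hΦ, hlam, hUdef] using this
  have trace_Φ : ∀ r : Fin d → ℝ, (Φ r).trace = ((∑ i, r i : ℝ) : ℂ) := by
    intro r
    rw [hΦ]
    dsimp only
    rw [trace_mul_cycle, hUU', one_mul, trace_diagonal]
    push_cast
    rfl
  have mul_Φ : ∀ r s : Fin d → ℝ,
      Φ r * Φ s = U * Matrix.diagonal (fun i => (r i : ℂ) * (s i : ℂ)) * star U := by
    intro r s
    rw [hΦ]
    dsimp only
    simp only [Matrix.mul_assoc]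
    rw [← Matrix.mul_assoc (star U) U, hUU', one_mul, ← Matrix.mul_assoc
      (Matrix.diagonal fun i => (r i : ℂ)), diagonal_mul_diagonal]
  have traceW_Φ : ∀ r : Fin d → ℝ, (W * Φ r).trace = ((∑ i, lam i * r i : ℝ) : ℂ) := by
    intro r
    rw [hspec, mul_Φ, trace_mul_cycle, hUU', one_mul, trace_diagonal]
    push_cast
    rfl
  have psd_Φ : ∀ r : Fin d → ℝ, (∀ i, 0 ≤ r i) → (Φ r).PosSemidef := by
    intro r hr
    have h1 : (Matrix.diagonal fun i => (r i : ℂ)).PosSemidef :=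
      posSemidef_diagonal_iff.mpr fun i => by exact_mod_cast Complex.zero_le_real.mpr (hr i)
    have := h1.mul_mul_conjTranspose_same U
    rw [hΦ]
    dsimp only
    rw [Matrix.star_eq_conjTranspose]
    exact this
  -- weights
  set S : ℝ := ∑ i, lam i with hS
  set s : ℝ := if 0 ≤ S then 0 else -S / lam i₀ with hs
  set t : ℝ := if 0 ≤ S then S / (-lam j₀) else 0 with ht
  have hs0 : 0 ≤ s := by
    rw [hs]; split_ifs with h
    · exact le_refl 0
    · have : S < 0 := not_le.mp h
      apply div_nonneg (by linarith) (le_of_lt ha)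
  have ht0 : 0 ≤ t := by
    rw [ht]; split_ifs with h
    · exact div_nonneg h (by linarith)
    · exact le_refl 0
  set q : Fin d → ℝ := fun i => 1 + (if i = i₀ then s else 0) + (if i = j₀ then t else 0) with hq
  have hq1 : ∀ i, 1 ≤ q i := by
    intro i; rw [hq]
    have e1 : (0:ℝ) ≤ (if i = i₀ then s else 0) := by split_ifs <;> simp [hs0]
    have e2 : (0:ℝ) ≤ (if i = j₀ then t else 0) := by split_ifs <;> simp [ht0]
    dsimp only
    linarith
  have hqlam : ∑ i, lam i * q i = 0 := by
    have expand : ∀ i, lam i * q i =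
        lam i + (if i = i₀ then lam i * s else 0) + (if i = j₀ then lam i * t else 0) := by
      intro i; rw [hq]; dsimp only; split_ifs <;> ring
    simp only [expand]
    rw [Finset.sum_add_distrib, Finset.sum_add_distrib, Finset.sum_ite_eq' Finset.univ i₀,
      Finset.sum_ite_eq' Finset.univ j₀]
    simp only [Finset.mem_univ, if_true]
    rw [hs, ht, ← hS]
    have hane : lam i₀ ≠ 0 := ne_of_gt ha
    have hbne : lam j₀ ≠ 0 := ne_of_lt hb
    split_ifs with h
    · have h2 : lam j₀ * (S / -lam j₀) = -S := by rw [div_neg, mul_neg, mul_div_cancel₀ S hbne]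
      rw [mul_zero, add_zero, h2]; ring
    · have h2 : lam i₀ * (-S / lam i₀) = -S := by rw [mul_div_cancel₀ (-S) hane]
      rw [mul_zero, add_zero, h2]; ring
  set T : ℝ := ∑ i, q i with hT
  have hdT : (d : ℝ) ≤ T := by
    rw [hT]
    calc (d:ℝ) = ∑ _i : Fin d, (1:ℝ) := by simp
      _ ≤ ∑ i, q i := Finset.sum_le_sum fun i _ => hq1 i
  have hd : 0 < d := Fin.pos i₀
  have hTpos : 0 < T := lt_of_lt_of_le (by exact_mod_cast hd) hdT
  set p : Fin d → ℝ := fun i => q i / T with hp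
  set ρ₀ : Matrix (Fin d) (Fin d) ℂ := Φ p with hρ₀
  have hρ₀tr : ρ₀.trace = 1 := by
    rw [hρ₀, trace_Φ, hp]
    dsimp only
    rw [← Finset.sum_div, ← hT, div_self (ne_of_gt hTpos)]
    norm_num
  have hρ₀W : (W * ρ₀).trace = 0 := by
    rw [hρ₀, traceW_Φ]
    have h1 : ∑ i, lam i * p i = 0 := by
      rw [hp]
      dsimp only
      simp only [mul_div_assoc']
      rw [← Finset.sum_div, hqlam, zero_div]
    rw [h1]
    norm_num
  have hρ₀psd : ρ₀.PosSemidef := psd_Φ p fun i => by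
    rw [hp]; dsimp only; exact div_nonneg (by linarith [hq1 i]) hTpos.le
  have hρ₀mem : ρ₀ ∈ Sset := ⟨⟨hρ₀psd, hρ₀tr⟩, hρ₀W⟩
  set μ : ℝ := 1 / T with hμ
  have hμpos : 0 < μ := by rw [hμ]; exact one_div_pos.mpr hTpos
  -- hermitian elements of M_W lie in the span
  have herm_mem : ∀ H : Matrix (Fin d) (Fin d) ℂ, H.IsHermitian → (W * H).trace = 0 →
      H ∈ Submodule.span ℂ Sset := by
    intro H hH hWH
    set c : ℂ := H.trace with hc
    have hcstar : star c = c := by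
      have h1 := Matrix.trace_conjTranspose H
      rw [hH.eq] at h1
      exact h1.symm
    set H' : Matrix (Fin d) (Fin d) ℂ := H - c • ρ₀ with hH'def
    have hH' : H'.IsHermitian := by
      rw [Matrix.IsHermitian, hH'def, conjTranspose_sub, conjTranspose_smul, hH.eq,
        hρ₀psd.1.eq, hcstar]
    have htr' : H'.trace = 0 := by
      rw [hH'def, trace_sub, trace_smul, hρ₀tr, ← hc]; simp
    have hWH' : (W * H').trace = 0 := by
      rw [hH'def, Matrix.mul_sub, Matrix.mul_smul, trace_sub, trace_smul, hWH, hρ₀W]; simp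
    set B : ℝ := ∑ i, ∑ j, ‖H' i j‖ with hBdef
    have hBnn : 0 ≤ B :=
      Finset.sum_nonneg fun _ _ => Finset.sum_nonneg fun _ _ => norm_nonneg _
    set ε : ℝ := μ / (B * d + 1) with hε
    have hεpos : 0 < ε := by rw [hε]; exact div_pos hμpos (add_pos_of_nonneg_of_pos (mul_nonneg hBnn (Nat.cast_nonneg d)) one_pos)
    have hεb : ε * (B * d) ≤ μ := by
      rw [hε, div_mul_eq_mul_div, div_le_iff₀ (add_pos_of_nonneg_of_pos (mul_nonneg hBnn (Nat.cast_nonneg d)) one_pos)]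
      nlinarith [hμpos.le, hBnn]
    set σ : Matrix (Fin d) (Fin d) ℂ := ρ₀ + (ε:ℂ) • H' with hσ
    have hdiag : (Matrix.diagonal fun i => ((p i - μ : ℝ) : ℂ)) =
        (Matrix.diagonal fun i => (p i : ℂ)) - (μ:ℂ) • (1 : Matrix (Fin d) (Fin d) ℂ) := by
      rw [Matrix.smul_one_eq_diagonal, Matrix.diagonal_sub]
      congr 1
      funext i
      push_cast
      ring
    have hsplit : Φ (fun i => p i - μ) = ρ₀ - (μ:ℂ) • 1 := by
      rw [hρ₀, hΦ]
      dsimp only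
      rw [hdiag, Matrix.mul_sub, Matrix.sub_mul, mul_smul_comm, mul_one, smul_mul_assoc, hUU]
    have hσpsd : σ.PosSemidef := by
      have h2 : ((μ:ℂ) • 1 + (ε:ℂ) • H').PosSemidef := aux_psd hH' hεpos.le (by
        rw [← mul_assoc] at hεb ⊢
        rw [← hBdef]
        exact (by rw [mul_assoc]; rw [mul_assoc] at hεb; exact hεb))
      have h1 : (Φ fun i => p i - μ).PosSemidef := psd_Φ _ fun i => by
        rw [sub_nonneg, hμ, hp]
        dsimp only
        exact (div_le_div_iff_of_pos_right hTpos).mpr (hq1 i)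
      have hσeq : σ = Φ (fun i => p i - μ) + ((μ:ℂ) • 1 + (ε:ℂ) • H') := by
        rw [hσ, hsplit]; abel
      rw [hσeq]; exact h1.add h2
    have hσtr : σ.trace = 1 := by
      rw [hσ, trace_add, trace_smul, htr', hρ₀tr]; simp
    have hσW : (W * σ).trace = 0 := by
      rw [hσ, Matrix.mul_add, Matrix.mul_smul, trace_add, trace_smul, hρ₀W, hWH']; simp
    have hσmem : σ ∈ Sset := ⟨⟨hσpsd, hσtr⟩, hσW⟩
    have hεne : (ε:ℂ) ≠ 0 := by exact_mod_cast ne_of_gt hεpos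
    have hre : H = (ε:ℂ)⁻¹ • (σ - ρ₀) + c • ρ₀ := by
      rw [hσ, add_sub_cancel_left, smul_smul, inv_mul_cancel₀ hεne, one_smul, hH'def,
        sub_add_cancel]
    rw [hre]
    exact Submodule.add_mem _
      (Submodule.smul_mem _ _ (Submodule.sub_mem _ (Submodule.subset_span hσmem)
        (Submodule.subset_span hρ₀mem)))
      (Submodule.smul_mem _ _ (Submodule.subset_span hρ₀mem))
  -- conclude
  apply Set.Subset.antisymm
  · intro X hX
    rw [SetLike.mem_coe] at hX
    show (W * X).trace = 0
    refine Submodule.span_induction (p := fun X _ => (W * X).trace = 0) ?_ ?_ ?_ ?_ hX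
    · exact fun ρ hρ => hρ.2
    · simp
    · intro A B _ _ hA hB; rw [Matrix.mul_add, trace_add, hA, hB, add_zero]
    · intro a A _ hA; rw [Matrix.mul_smul, trace_smul, hA, smul_zero]
  · intro X hX
    simp only [Set.mem_setOf_eq] at hX
    rw [SetLike.mem_coe]
    have hXH : (W * Xᴴ).trace = 0 := by
      have h1 : W * Xᴴ = (X * Wᴴ)ᴴ := by rw [conjTranspose_mul, conjTranspose_conjTranspose]
      rw [h1, trace_conjTranspose, hW.eq, trace_mul_comm, hX, star_zero]
    set H₁ := (1/2 : ℂ) • (X + Xᴴ) with h1def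
    set H₂ := (-(Complex.I)/2 : ℂ) • (X - Xᴴ) with h2def
    have hH₁ : H₁.IsHermitian := by
      rw [Matrix.IsHermitian, h1def, conjTranspose_smul, conjTranspose_add,
        conjTranspose_conjTranspose]
      have : star (1/2 : ℂ) = (1/2 : ℂ) := by simp
      rw [this, add_comm Xᴴ X]
    have hH₂ : H₂.IsHermitian := by
      rw [Matrix.IsHermitian, h2def, conjTranspose_smul, conjTranspose_sub,
        conjTranspose_conjTranspose]
      have h3 : star (-(Complex.I)/2 : ℂ) = (Complex.I/2 : ℂ) := by
        simp [Complex.star_def, neg_div]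
      rw [h3]
      module
    have hWH₁ : (W * H₁).trace = 0 := by
      rw [h1def, Matrix.mul_smul, trace_smul, Matrix.mul_add, trace_add, hX, hXH]; simp
    have hWH₂ : (W * H₂).trace = 0 := by
      rw [h2def, Matrix.mul_smul, trace_smul, Matrix.mul_sub, trace_sub, hX, hXH]; simp
    have hXeq : X = H₁ + Complex.I • H₂ := by
      rw [h1def, h2def, smul_smul]
      have h4 : Complex.I * (-(Complex.I)/2) = 1/2 := by
        rw [neg_div, mul_neg, ← mul_div_assoc, Complex.I_mul_I]
        norm_num
      rw [h4]
      module
    rw [hXeq]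
    exact Submodule.add_mem _ (herm_mem H₁ hH₁ hWH₁)
      (Submodule.smul_mem _ _ (herm_mem H₂ hH₂ hWH₂))
end
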